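/- Let X₁,…,Xₙ be independent random elements of a separable metrizable topological group G with partial products x^j_k = X_{j+1}⋯X_k, and let U_δ be a symmetric measurable neighborhood of e. Suppose P(∃ j ≤ k ≤ n : x^j_k ∉ U_δ) ≤ α < 1. Let Y be the maximal number of oscillations: Y = max { m : ∃ indices j₀ < … < j_m ≤ n with x^{j_{i−1}}_{j_i} ∉ U_δ for all i }. Then E(Y) ≤ α/(1−α). -/

import Mathlib

open MeasureTheory ProbabilityTheory
open scoped ENNReal

/-- The partial product `X_{j+1} ⋯ X_k` of a sequence of `G`-valued maps. -/
def partialProd {Ω G : Type*} [Monoid G] (X : ℕ → Ω → G) (j k : ℕ) (ω : Ω) : G :=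
  ((List.range' (j + 1) (k - j)).map (fun i => X i ω)).prod

/-- The maximal number of oscillations: the largest `m` such that there are
indices `j₀ < … < j_m ≤ n` with `x^{j_{i-1}}_{j_i} ∉ U` for all `i`. -/
noncomputable def oscillations {Ω G : Type*} [Monoid G] (X : ℕ → Ω → G) (n : ℕ)
    (U : Set G) (ω : Ω) : ℝ≥0∞ :=
  ⨆ (m : ℕ) (_ : ∃ τ : Fin (m + 1) → ℕ, StrictMono τ ∧ (∀ i, τ i ≤ n) ∧
      ∀ i : Fin m, partialProd X (τ i.castSucc) (τ i.succ) ω ∉ U), (m : ℝ≥0∞)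

section Aux

variable {Ω G : Type*} [Monoid G] [MeasurableSpace G] [MeasurableMul₂ G]

/-- The event that there are `m` oscillations with indices bounded by `k`. -/
def oscSet (X : ℕ → Ω → G) (U : Set G) (m k : ℕ) : Set Ω :=
  {ω | ∃ τ : Fin (m + 1) → ℕ, StrictMono τ ∧ (∀ i, τ i ≤ k) ∧
      ∀ i : Fin m, partialProd X (τ i.castSucc) (τ i.succ) ω ∉ U}

lemma measurable_partialProd' (m' : MeasurableSpace Ω) (X : ℕ → Ω → G)
    (j k : ℕ) (h : ∀ i, j < i → i ≤ k → Measurable[m'] (X i)) :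
    Measurable[m'] (partialProd X j k) := by
  unfold partialProd
  have hl : ∀ i ∈ List.range' (j + 1) (k - j), Measurable[m'] (X i) := by
    intro i hi
    rw [List.mem_range'_1] at hi
    exact h i (by omega) (by omega)
  revert hl
  generalize List.range' (j + 1) (k - j) = l
  induction l with
  | nil => intro _; simpa using measurable_const
  | cons a l ih =>
      intro hl
      simp only [List.map_cons, List.prod_cons]
      exact (hl a (by simp)).mul (ih fun i hi => hl i (List.mem_cons_of_mem _ hi))

lemma measurableSet_oscSet' (m' : MeasurableSpace Ω) (X : ℕ → Ω → G) {U : Set G}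
    (hU : MeasurableSet U) (m k : ℕ) (h : ∀ i, i ≤ k → Measurable[m'] (X i)) :
    MeasurableSet[m'] (oscSet X U m k) := by
  have : oscSet X U m k = ⋃ (τ : Fin (m + 1) → ℕ) (_ : StrictMono τ ∧ ∀ i, τ i ≤ k),
      ⋂ i : Fin m, (partialProd X (τ i.castSucc) (τ i.succ)) ⁻¹' Uᶜ := by
    ext ω
    simp only [oscSet, Set.mem_setOf_eq, Set.mem_iUnion, Set.mem_iInter, Set.mem_preimage,
      Set.mem_compl_iff]
    constructor
    · rintro ⟨τ, h1, h2, h3⟩; exact ⟨τ, ⟨h1, h2⟩, h3⟩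
    · rintro ⟨τ, ⟨h1, h2⟩, h3⟩; exact ⟨τ, h1, h2, h3⟩
  rw [this]
  refine MeasurableSet.iUnion fun τ => MeasurableSet.iUnion fun hτ => ?_
  refine MeasurableSet.iInter fun i => ?_
  exact measurable_partialProd' m' X _ _
    (fun i' _ hi' => h i' (hi'.trans (hτ.2 i.succ))) hU.compl

lemma measurable_partialProd {mΩ : MeasurableSpace Ω} (X : ℕ → Ω → G)
    (hmeas : ∀ i, Measurable (X i)) (j k : ℕ) : Measurable (partialProd X j k) :=
  measurable_partialProd' mΩ X j k fun i _ _ => hmeas i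

lemma measurableSet_oscSet {mΩ : MeasurableSpace Ω} (X : ℕ → Ω → G) {U : Set G}
    (hU : MeasurableSet U) (m k : ℕ) (hmeas : ∀ i, Measurable (X i)) :
    MeasurableSet (oscSet X U m k) :=
  measurableSet_oscSet' mΩ X hU m k fun i _ => hmeas i

lemma oscSet_mono (X : ℕ → Ω → G) (U : Set G) (m : ℕ) {k k' : ℕ} (h : k ≤ k') :
    oscSet X U m k ⊆ oscSet X U m k' := by
  rintro ω ⟨τ, h1, h2, h3⟩
  exact ⟨τ, h1, fun i => (h2 i).trans h, h3⟩

lemma oscSet_anti (X : ℕ → Ω → G) (U : Set G) {m m' k : ℕ} (h : m' ≤ m) :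
    oscSet X U m k ⊆ oscSet X U m' k := by
  rintro ω ⟨τ, h1, h2, h3⟩
  refine ⟨fun t => τ ⟨t.val, by omega⟩, ?_, fun i => h2 _, ?_⟩
  · intro a b hab
    exact h1 (Fin.mk_lt_mk.2 hab)
  · intro t
    exact h3 ⟨t.val, by omega⟩

lemma le_of_mem_oscSet {X : ℕ → Ω → G} {U : Set G} {m k : ℕ} {ω : Ω}
    (h : ω ∈ oscSet X U m k) : m ≤ k := by
  obtain ⟨τ, h1, h2, -⟩ := h
  have key : ∀ i : Fin (m + 1), (i : ℕ) ≤ τ i := by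
    intro i
    induction i using Fin.induction with
    | zero => exact Nat.zero_le _
    | succ i ih =>
        have := h1 (Fin.castSucc_lt_succ (i := i))
        simp only [Fin.val_succ, Fin.coe_castSucc] at *
        omega
  have := key ⟨m, Nat.lt_succ_self m⟩
  exact le_trans (by simpa using this) (h2 _)

end Aux

theorem expected_oscillation_bound {Ω G : Type*} [MeasurableSpace Ω]
    {μ : Measure Ω} [IsProbabilityMeasure μ]
    [Group G] [TopologicalSpace G] [IsTopologicalGroup G]
    [TopologicalSpace.SeparableSpace G] [TopologicalSpace.MetrizableSpace G]
    [MeasurableSpace G] [BorelSpace G]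
    (n : ℕ) (X : ℕ → Ω → G) (hmeas : ∀ i, Measurable (X i))
    (hindep : iIndepFun X μ)
    (U : Set G) (hU : MeasurableSet U) (hUnhds : U ∈ nhds (1 : G))
    (hUsymm : ∀ g ∈ U, g⁻¹ ∈ U)
    (α : ℝ≥0∞) (hα : α < 1)
    (hbound : μ {ω | ∃ j k, j ≤ k ∧ k ≤ n ∧ partialProd X j k ω ∉ U} ≤ α) :
    ∫⁻ ω, oscillations X n U ω ∂μ ≤ α / (1 - α) := by
  haveI : SecondCountableTopology G := by
    letI := TopologicalSpace.pseudoMetrizableSpacePseudoMetric G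
    exact UniformSpace.secondCountable_of_separable G
  -- the "oscillation after time k" events
  set C : ℕ → Set Ω := fun k =>
    {ω | ∃ j l, k ≤ j ∧ j < l ∧ l ≤ n ∧ partialProd X j l ω ∉ U} with hC
  -- the "first completion time" events
  set B : ℕ → ℕ → Set Ω := fun m k =>
    oscSet X U m k \ ⋃ (k' : ℕ) (_ : k' < k), oscSet X U m k' with hB
  -- sub-σ-algebras
  set F : ℕ → MeasurableSpace Ω := fun k => ⨆ i ∈ Set.Iic k, MeasurableSpace.comap (X i) inferInstance with hF
  set F' : ℕ → MeasurableSpace Ω := fun k => ⨆ i ∈ Set.Ioi k, MeasurableSpace.comap (X i) inferInstance with hF'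
  have hFle : ∀ k, F k ≤ ‹MeasurableSpace Ω› := by
    intro k
    refine iSup₂_le fun i _ => ?_
    exact (hmeas i).comap_le
  have hF'le : ∀ k, F' k ≤ ‹MeasurableSpace Ω› := by
    intro k
    refine iSup₂_le fun i _ => ?_
    exact (hmeas i).comap_le
  have hXF : ∀ k i, i ≤ k → Measurable[F k] (X i) := by
    intro k i hi
    rw [measurable_iff_comap_le]
    exact le_biSup (fun i => MeasurableSpace.comap (X i) inferInstance) (Set.mem_Iic.2 hi)
  have hXF' : ∀ k i, k < i → Measurable[F' k] (X i) := by
    intro k i hi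
    rw [measurable_iff_comap_le]
    exact le_biSup (fun i => MeasurableSpace.comap (X i) inferInstance) (Set.mem_Ioi.2 hi)
  -- independence of F k and F' k
  have hInd : ∀ k, Indep (F k) (F' k) μ := by
    intro k
    refine indep_iSup_of_disjoint (fun i => (hmeas i).comap_le) hindep.iIndep ?_
    simp [Set.disjoint_left]
  -- measurability facts
  have hOscMeas : ∀ m k, MeasurableSet[F k] (oscSet X U m k) := fun m k =>
    measurableSet_oscSet' (F k) X hU m k (hXF k)
  have hBMeasF : ∀ m k, MeasurableSet[F k] (B m k) := by
    intro m k
    refine (hOscMeas m k).diff ?_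
    refine MeasurableSet.iUnion fun k' => MeasurableSet.iUnion fun hk' => ?_
    exact measurableSet_oscSet' (F k) X hU m k' fun i hi => hXF k i (hi.trans hk'.le)
  have hCMeasF' : ∀ k, MeasurableSet[F' k] (C k) := by
    intro k
    have : C k = ⋃ (j : ℕ) (l : ℕ) (_ : k ≤ j ∧ j < l ∧ l ≤ n),
        (partialProd X j l) ⁻¹' Uᶜ := by
      ext ω
      simp only [hC, Set.mem_setOf_eq, Set.mem_iUnion, Set.mem_preimage, Set.mem_compl_iff]
      constructor
      · rintro ⟨j, l, h1, h2, h3, h4⟩; exact ⟨j, l, ⟨h1, h2, h3⟩, h4⟩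
      · rintro ⟨j, l, ⟨h1, h2, h3⟩, h4⟩; exact ⟨j, l, h1, h2, h3, h4⟩
    rw [this]
    refine MeasurableSet.iUnion fun j => MeasurableSet.iUnion fun l =>
      MeasurableSet.iUnion fun hjl => ?_
    exact measurable_partialProd' (F' k) X j l
      (fun i hi _ => hXF' k i (by omega)) hU.compl
  have hBMeas : ∀ m k, MeasurableSet (B m k) := fun m k => hFle k _ (hBMeasF m k)
  have hCMeas : ∀ k, MeasurableSet (C k) := fun k => hF'le k _ (hCMeasF' k)
  -- bound on μ (C k)
  have hCbound : ∀ k, μ (C k) ≤ α := by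
    intro k
    refine le_trans (measure_mono ?_) hbound
    rintro ω ⟨j, l, h1, h2, h3, h4⟩
    exact ⟨j, l, h2.le, h3, h4⟩
  -- B m k are pairwise disjoint, with union oscSet X U m n for k ≤ n
  have hBdisj : ∀ m, (↑(Finset.range (n + 1)) : Set ℕ).PairwiseDisjoint (B m) := by
    intro m
    have key : ∀ k k' : ℕ, k < k' → Disjoint (B m k) (B m k') := by
      intro k k' h
      refine Set.disjoint_left.2 fun ω hω hω' => ?_
      exact hω'.2 (Set.mem_iUnion₂.2 ⟨k, h, hω.1⟩)
    intro k _ k' _ hkk'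
    rcases lt_or_gt_of_ne hkk' with h | h
    · exact key k k' h
    · exact (key k' k h).symm
  have hBunion : ∀ m, (⋃ k ∈ Finset.range (n + 1), B m k) = oscSet X U m n := by
    intro m
    apply Set.Subset.antisymm
    · refine Set.iUnion₂_subset fun k hk => ?_
      refine Set.Subset.trans Set.diff_subset ?_
      exact oscSet_mono X U m (by simpa [Nat.lt_succ_iff] using hk)
    · intro ω hω
      have hex : ∃ k, ω ∈ oscSet X U m k := ⟨n, hω⟩
      classical
      set k₀ := Nat.find hex with hk₀
      have hk₀mem : ω ∈ oscSet X U m k₀ := Nat.find_spec hex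
      have hk₀le : k₀ ≤ n := Nat.find_le hω
      refine Set.mem_iUnion₂.2 ⟨k₀, by simpa [Nat.lt_succ_iff] using hk₀le, hk₀mem, ?_⟩
      intro hmem
      obtain ⟨k', hk', hk'mem⟩ := Set.mem_iUnion₂.1 hmem
      exact absurd hk'mem (Nat.find_min hex hk')
  -- key recursion: μ (oscSet (m+1) n) ≤ μ (oscSet m n) * α
  have hkey : ∀ m, μ (oscSet X U (m + 1) n) ≤ μ (oscSet X U m n) * α := by
    intro m
    have hsub : oscSet X U (m + 1) n ⊆ ⋃ k ∈ Finset.range (n + 1), B m k ∩ C k := by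
      rintro ω ⟨τ, h1, h2, h3⟩
      -- ω has m oscillations by time τ ⟨m⟩
      have hωm : ω ∈ oscSet X U m (τ ⟨m, by omega⟩) := by
        refine ⟨fun t => τ ⟨t.val, by omega⟩, ?_, ?_, ?_⟩
        · intro a b hab
          exact h1 (Fin.mk_lt_mk.2 hab)
        · intro i
          exact h1.monotone (Fin.mk_le_mk.2 i.is_le)
        · intro t
          exact h3 ⟨t.val, by omega⟩
      have hex : ∃ k, ω ∈ oscSet X U m k := ⟨_, hωm⟩
      classical
      set k₀ := Nat.find hex with hk₀
      have hk₀mem : ω ∈ oscSet X U m k₀ := Nat.find_spec hex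
      have hk₀τ : k₀ ≤ τ ⟨m, by omega⟩ := Nat.find_le hωm
      have hk₀n : k₀ ≤ n := hk₀τ.trans (h2 _)
      refine Set.mem_iUnion₂.2 ⟨k₀, by simpa [Nat.lt_succ_iff] using hk₀n, ⟨hk₀mem, ?_⟩, ?_⟩
      · intro hmem
        obtain ⟨k', hk', hk'mem⟩ := Set.mem_iUnion₂.1 hmem
        exact absurd hk'mem (Nat.find_min hex hk')
      · refine ⟨τ ⟨m, by omega⟩, τ ⟨m + 1, by omega⟩, hk₀τ, ?_, h2 _, ?_⟩
        · exact h1 (Fin.mk_lt_mk.2 (by omega))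
        · exact h3 ⟨m, by omega⟩
    calc μ (oscSet X U (m + 1) n) ≤ μ (⋃ k ∈ Finset.range (n + 1), B m k ∩ C k) :=
          measure_mono hsub
      _ ≤ ∑ k ∈ Finset.range (n + 1), μ (B m k ∩ C k) := measure_biUnion_finset_le _ _
      _ = ∑ k ∈ Finset.range (n + 1), μ (B m k) * μ (C k) := by
          refine Finset.sum_congr rfl fun k _ => ?_
          exact (Indep_iff _ _ _).1 (hInd k) _ _ (hBMeasF m k) (hCMeasF' k)
      _ ≤ ∑ k ∈ Finset.range (n + 1), μ (B m k) * α := by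
          refine Finset.sum_le_sum fun k _ => ?_
          exact mul_le_mul_right (hCbound k) _
      _ = (∑ k ∈ Finset.range (n + 1), μ (B m k)) * α := by rw [Finset.sum_mul]
      _ = μ (⋃ k ∈ Finset.range (n + 1), B m k) * α := by
          rw [measure_biUnion_finset (hBdisj m) fun k _ => hBMeas m k]
      _ = μ (oscSet X U m n) * α := by rw [hBunion m]
  -- μ (oscSet m n) ≤ α^m
  have hpow : ∀ m, μ (oscSet X U m n) ≤ α ^ m := by
    intro m
    induction m with
    | zero =>
        simp only [pow_zero]
        exact le_trans (measure_mono (Set.subset_univ _)) (le_of_eq measure_univ)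
    | succ m ih =>
        calc μ (oscSet X U (m + 1) n) ≤ μ (oscSet X U m n) * α := hkey m
          _ ≤ α ^ m * α := mul_le_mul_left ih α
          _ = α ^ (m + 1) := (pow_succ α m).symm
  -- pointwise bound: oscillations ≤ ∑_{m ∈ Icc 1 n} indicator (oscSet m n)
  have hpt : ∀ ω, oscillations X n U ω ≤
      ∑ m ∈ Finset.Icc 1 n, (oscSet X U m n).indicator (fun _ => (1 : ℝ≥0∞)) ω := by
    intro ω
    refine iSup₂_le fun m hm => ?_
    have hωm : ω ∈ oscSet X U m n := hm
    have hmn : m ≤ n := le_of_mem_oscSet hωm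
    calc (m : ℝ≥0∞) = ∑ _i ∈ Finset.Icc 1 m, (1 : ℝ≥0∞) := by
          simp [Nat.card_Icc]
      _ = ∑ i ∈ Finset.Icc 1 m, (oscSet X U i n).indicator (fun _ => (1 : ℝ≥0∞)) ω := by
          refine Finset.sum_congr rfl fun i hi => ?_
          rw [Set.indicator_of_mem (oscSet_anti X U (by simp at hi; omega) hωm)]
      _ ≤ ∑ m ∈ Finset.Icc 1 n, (oscSet X U m n).indicator (fun _ => (1 : ℝ≥0∞)) ω := by
          refine Finset.sum_le_sum_of_subset ?_
          exact Finset.Icc_subset_Icc_right hmn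
  calc ∫⁻ ω, oscillations X n U ω ∂μ
      ≤ ∫⁻ ω, ∑ m ∈ Finset.Icc 1 n,
          (oscSet X U m n).indicator (fun _ => (1 : ℝ≥0∞)) ω ∂μ := lintegral_mono hpt
    _ = ∑ m ∈ Finset.Icc 1 n, ∫⁻ ω, (oscSet X U m n).indicator (fun _ => (1 : ℝ≥0∞)) ω ∂μ := by
        refine lintegral_finset_sum _ fun m _ => ?_
        exact (measurable_const.indicator (measurableSet_oscSet X hU m n hmeas))
    _ = ∑ m ∈ Finset.Icc 1 n, μ (oscSet X U m n) := by
        refine Finset.sum_congr rfl fun m _ => ?_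
        rw [lintegral_indicator_const (measurableSet_oscSet X hU m n hmeas), one_mul]
    _ ≤ ∑ m ∈ Finset.Icc 1 n, α ^ m := Finset.sum_le_sum fun m _ => hpow m
    _ ≤ ∑' m : ℕ, α ^ (m + 1) := by
        have him : Finset.Icc 1 n = (Finset.range n).image (· + 1) := by
          ext x
          simp only [Finset.mem_Icc, Finset.mem_image, Finset.mem_range]
          constructor
          · rintro ⟨h1, h2⟩; exact ⟨x - 1, by omega, by omega⟩
          · rintro ⟨a, ha, rfl⟩; omega
        rw [him, Finset.sum_image (by intro a _ b _ h; simp only at h; omega)]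
        exact ENNReal.sum_le_tsum _
    _ = α / (1 - α) := by
        simp_rw [pow_succ, mul_comm]
        rw [ENNReal.tsum_mul_left, ENNReal.tsum_geometric, ENNReal.div_eq_inv_mul, mul_comm]
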